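/- Define the generating series F'(t) = \sum_T q^{-(m-1)|T|(|T|-1)/2 + |D(T)|} t^{|T|}, summing over all finite trees T \subset \Omega (including the empty tree). Then F'(t) satisfies the functional equation F'(t) = 1 + t \prod_{k=1}^m F'(q^{1-k} t). -/

import Mathlib

open PowerSeries LaurentPolynomial
open scoped Classical

/-- A (finite) tree: a finite set of words over `{1,…,m}` closed under prefixes. -/
def IsTree (m : ℕ) (T : Finset (List (Fin m))) : Prop :=
  ∀ ω ∈ T, ∀ ω' : List (Fin m), ω' <+: ω → ω' ∈ T

/-- The set `D(T)` of triples `(ω,k,ω')` with `ω ∈ T`, `ωk ∉ T`, `ω' ∈ T`,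
`ω' <_lex ωk`, and `ω'` not a prefix of `ω`. -/
noncomputable def Dset (m : ℕ) (T : Finset (List (Fin m))) :
    Finset ((List (Fin m) × Fin m) × List (Fin m)) :=
  ((T ×ˢ (Finset.univ : Finset (Fin m))) ×ˢ T).filter fun x =>
    x.1.1 ++ [x.1.2] ∉ T ∧ List.Lex (· < ·) x.2 (x.1.1 ++ [x.1.2]) ∧ ¬ x.2 <+: x.1.1

/-- The (finite) collection of all trees with exactly `d` elements; any such tree
consists of words of length `< d`. -/
noncomputable def treesOfSize (m d : ℕ) : Finset (Finset (List (Fin m))) :=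
  (((Finset.range d).biUnion fun n =>
      (Finset.univ : Finset (Fin n → Fin m)).image fun f => List.ofFn f).powerset).filter
    fun T => IsTree m T ∧ T.card = d

/-- The generating series `F'(t) = ∑_T q^{-(m-1)|T|(|T|-1)/2 + |D(T)|} t^{|T|}`, summed over
all finite trees, with coefficients in the Laurent polynomial ring (where `q = T 1`). -/
noncomputable def Fpaving (m : ℕ) : PowerSeries (LaurentPolynomial ℤ) :=
  PowerSeries.mk fun d =>
    ∑ S ∈ treesOfSize m d,
      (T (-(((m : ℤ) - 1) * d * ((d : ℤ) - 1) / 2) + (Dset m S).card) :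
        LaurentPolynomial ℤ)

section Aux
variable {m : ℕ}

lemma lex_cons_cons_iff {j i : Fin m} {τ σ : List (Fin m)} :
    List.Lex (· < ·) (j::τ) (i::σ) ↔ j < i ∨ (j = i ∧ List.Lex (· < ·) τ σ) := by
  constructor
  · intro h
    cases h with
    | rel h => exact Or.inl h
    | cons h => exact Or.inr ⟨rfl, h⟩
  · rintro (h | ⟨rfl, h⟩)
    exacts [.rel h, .cons h]

noncomputable def glue (f : Fin m → Finset (List (Fin m))) : Finset (List (Fin m)) :=
  insert [] (Finset.univ.biUnion fun k => (f k).image (k :: ·))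

noncomputable def subt (k : Fin m) (T : Finset (List (Fin m))) : Finset (List (Fin m)) :=
  (T.filter fun ω => ω.head? = some k).image List.tail

lemma mem_glue {f : Fin m → Finset (List (Fin m))} {ω : List (Fin m)} :
    ω ∈ glue f ↔ ω = [] ∨ ∃ k σ, σ ∈ f k ∧ ω = k :: σ := by
  simp only [glue, Finset.mem_insert, Finset.mem_biUnion, Finset.mem_univ, true_and,
    Finset.mem_image]
  constructor
  · rintro (h | ⟨k, σ, hσ, rfl⟩)
    · exact Or.inl h
    · exact Or.inr ⟨k, σ, hσ, rfl⟩
  · rintro (h | ⟨k, σ, hσ, rfl⟩)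
    · exact Or.inl h
    · exact Or.inr ⟨k, σ, hσ, rfl⟩

lemma cons_mem_glue {f : Fin m → Finset (List (Fin m))} {k : Fin m} {σ : List (Fin m)} :
    k :: σ ∈ glue f ↔ σ ∈ f k := by
  rw [mem_glue]
  constructor
  · rintro (h | ⟨k', σ', hσ', h⟩)
    · simp at h
    · obtain ⟨rfl, rfl⟩ : k' = k ∧ σ' = σ := by simpa [eq_comm] using h
      exact hσ'
  · intro h; exact Or.inr ⟨k, σ, h, rfl⟩

lemma mem_subt {T : Finset (List (Fin m))} {k : Fin m} {σ : List (Fin m)} :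
    σ ∈ subt k T ↔ k :: σ ∈ T := by
  simp only [subt, Finset.mem_image, Finset.mem_filter]
  constructor
  · rintro ⟨ω, ⟨hω, hh⟩, rfl⟩
    cases ω with
    | nil => simp at hh
    | cons a l =>
      obtain rfl : a = k := by simpa using hh
      exact hω
  · intro h
    exact ⟨k :: σ, ⟨h, rfl⟩, rfl⟩

lemma subt_glue {f : Fin m → Finset (List (Fin m))} (k : Fin m) : subt k (glue f) = f k := by
  ext σ; rw [mem_subt, cons_mem_glue]

lemma nil_mem_of_isTree {T : Finset (List (Fin m))} (hT : IsTree m T) (h : T.Nonempty) :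
    [] ∈ T := by
  obtain ⟨ω, hω⟩ := h
  exact hT ω hω [] (List.nil_prefix)

lemma glue_subt {T : Finset (List (Fin m))} (hT : IsTree m T) (h : T.Nonempty) :
    glue (fun k => subt k T) = T := by
  ext ω
  rw [mem_glue]
  constructor
  · rintro (rfl | ⟨k, σ, hσ, rfl⟩)
    · exact nil_mem_of_isTree hT h
    · exact mem_subt.mp hσ
  · intro hω
    cases ω with
    | nil => exact Or.inl rfl
    | cons a l => exact Or.inr ⟨a, l, mem_subt.mpr hω, rfl⟩

lemma isTree_subt {T : Finset (List (Fin m))} (hT : IsTree m T) (k : Fin m) :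
    IsTree m (subt k T) := by
  intro ω hω ω' hpre
  rw [mem_subt] at hω ⊢
  exact hT _ hω (k :: ω') (List.cons_prefix_cons.mpr ⟨rfl, hpre⟩)

lemma isTree_glue {f : Fin m → Finset (List (Fin m))} (hf : ∀ k, IsTree m (f k)) :
    IsTree m (glue f) := by
  intro ω hω ω' hpre
  rw [mem_glue] at hω
  rcases hω with rfl | ⟨k, σ, hσ, rfl⟩
  · rw [List.prefix_nil] at hpre
    subst hpre
    exact mem_glue.mpr (Or.inl rfl)
  · cases ω' with
    | nil => exact mem_glue.mpr (Or.inl rfl)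
    | cons a l =>
      obtain ⟨rfl, hl⟩ := List.cons_prefix_cons.mp hpre
      exact cons_mem_glue.mpr (hf _ σ hσ l hl)

lemma card_glue (f : Fin m → Finset (List (Fin m))) :
    (glue f).card = 1 + ∑ k, (f k).card := by
  rw [glue, Finset.card_insert_of_notMem, Finset.card_biUnion, add_comm]
  · congr 1
    exact Finset.sum_congr rfl fun k _ =>
      Finset.card_image_of_injective _ (fun a b h => by simpa using h)
  · intro a _ b _ hab
    simp only [Finset.disjoint_left, Finset.mem_image]
    rintro ω ⟨σ, _, rfl⟩ ⟨τ, _, h⟩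
    apply hab
    simpa using (List.cons_eq_cons.mp h.symm).1
  · simp only [Finset.mem_biUnion, Finset.mem_image]
    rintro ⟨k, -, σ, -, h⟩
    exact List.cons_ne_nil _ _ h


lemma nodup_inits (ω : List (Fin m)) : ω.inits.Nodup := by
  induction ω with
  | nil => simp
  | cons a l ih =>
    rw [List.inits_cons]
    refine List.Nodup.cons ?_ (ih.map fun x y h => by simpa using h)
    simp only [List.mem_map]
    rintro ⟨x, -, h⟩
    exact List.cons_ne_nil a x h

lemma length_lt_card {T : Finset (List (Fin m))} (hT : IsTree m T) {ω : List (Fin m)}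
    (hω : ω ∈ T) : ω.length < T.card := by
  have hsub : ω.inits.toFinset ⊆ T := by
    intro x hx
    simp only [List.mem_toFinset, List.mem_inits] at hx
    exact hT ω hω x hx
  have := Finset.card_le_card hsub
  rwa [List.toFinset_card_of_nodup (nodup_inits ω), List.length_inits, Nat.succ_le_iff] at this

lemma mem_treesOfSize {d : ℕ} {S : Finset (List (Fin m))} :
    S ∈ treesOfSize m d ↔ IsTree m S ∧ S.card = d := by
  rw [treesOfSize, Finset.mem_filter, and_iff_right_iff_imp]
  rintro ⟨hS, hcard⟩
  rw [Finset.mem_powerset]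
  intro ω hω
  simp only [Finset.mem_biUnion, Finset.mem_range, Finset.mem_image, Finset.mem_univ, true_and]
  exact ⟨ω.length, hcard ▸ length_lt_card hS hω, ω.get, List.ofFn_get ω⟩


noncomputable def bdry (T : Finset (List (Fin m))) : Finset (List (Fin m) × Fin m) :=
  (T ×ˢ (Finset.univ : Finset (Fin m))).filter fun p => p.1 ++ [p.2] ∉ T

lemma inner_card {T : Finset (List (Fin m))} (hT : IsTree m T) (hne : [] ∈ T) :
    ((T ×ˢ (Finset.univ : Finset (Fin m))).filter fun p => p.1 ++ [p.2] ∈ T).card + 1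
      = T.card := by
  have h1 : ((T ×ˢ (Finset.univ : Finset (Fin m))).filter fun p => p.1 ++ [p.2] ∈ T).card
      = (T.erase []).card := by
    apply Finset.card_bij (fun p _ => p.1 ++ [p.2])
    · rintro ⟨σ, k⟩ hp
      simp only [Finset.mem_filter] at hp
      exact Finset.mem_erase.mpr ⟨by simp, hp.2⟩
    · rintro ⟨σ, k⟩ hp ⟨σ', k'⟩ hp' h
      obtain ⟨h1, h2⟩ := List.append_inj' h (by simp)
      simp only [List.cons.injEq] at h2
      simp only at h1
      simp [Prod.ext_iff, h1, h2.1]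
    · intro ω hω
      rw [Finset.mem_erase] at hω
      refine ⟨(ω.dropLast, ω.getLast hω.1), ?_, ?_⟩
      · simp only [Finset.mem_filter, Finset.mem_product, Finset.mem_univ, and_true]
        constructor
        · exact hT ω hω.2 _ (List.dropLast_prefix ω)
        · rw [List.dropLast_append_getLast hω.1]; exact hω.2
      · exact List.dropLast_append_getLast hω.1
  rw [h1, Finset.card_erase_add_one hne]

lemma bdry_card_add {T : Finset (List (Fin m))} (hT : IsTree m T) (hne : [] ∈ T) :
    (bdry T).card + T.card = m * T.card + 1 := by
  have hsplit := Finset.card_filter_add_card_filter_not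
    (s := T ×ˢ (Finset.univ : Finset (Fin m))) (p := fun p => p.1 ++ [p.2] ∉ T)
  rw [Finset.card_product, Finset.card_univ, Fintype.card_fin] at hsplit
  have h2 := inner_card hT hne
  have : ((T ×ˢ (Finset.univ : Finset (Fin m))).filter fun p => ¬ p.1 ++ [p.2] ∉ T).card
      = ((T ×ˢ (Finset.univ : Finset (Fin m))).filter fun p => p.1 ++ [p.2] ∈ T).card := by
    congr 1; ext p; simp
  rw [this] at hsplit
  rw [bdry, mul_comm m T.card]
  omega

noncomputable def lowerF (f : Fin m → Finset (List (Fin m))) (i : Fin m) :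
    Finset (List (Fin m)) :=
  (Finset.univ.filter (· < i)).biUnion fun j => (f j).image (j :: ·)

lemma mem_lowerF {f : Fin m → Finset (List (Fin m))} {i : Fin m} {ω : List (Fin m)} :
    ω ∈ lowerF f i ↔ ∃ j, j < i ∧ ∃ τ ∈ f j, ω = j :: τ := by
  simp only [lowerF, Finset.mem_biUnion, Finset.mem_filter, Finset.mem_univ, true_and,
    Finset.mem_image]
  constructor
  · rintro ⟨j, hj, τ, hτ, rfl⟩; exact ⟨j, hj, τ, hτ, rfl⟩
  · rintro ⟨j, hj, τ, hτ, rfl⟩; exact ⟨j, hj, τ, hτ, rfl⟩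

lemma card_lowerF (f : Fin m → Finset (List (Fin m))) (i : Fin m) :
    (lowerF f i).card = ∑ j ∈ Finset.univ.filter (· < i), (f j).card := by
  rw [lowerF, Finset.card_biUnion]
  · exact Finset.sum_congr rfl fun k _ =>
      Finset.card_image_of_injective _ (fun a b h => by simpa using h)
  · intro a _ b _ hab
    simp only [Finset.disjoint_left, Finset.mem_image]
    rintro ω ⟨σ, _, rfl⟩ ⟨τ, _, h⟩
    apply hab
    simpa using (List.cons_eq_cons.mp h.symm).1

noncomputable def stem (f : Fin m → Finset (List (Fin m))) (i : Fin m) :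
    Finset (List (Fin m) × Fin m) :=
  if f i = ∅ then {([], i)} else (bdry (f i)).image fun p => (i :: p.1, p.2)

lemma mem_stem {f : Fin m → Finset (List (Fin m))} {i : Fin m} {p : List (Fin m) × Fin m} :
    p ∈ stem f i ↔ (f i = ∅ ∧ p = ([], i)) ∨
      (∃ σ k, σ ∈ f i ∧ σ ++ [k] ∉ f i ∧ p = (i :: σ, k)) := by
  rw [stem]
  split_ifs with h
  · simp only [Finset.mem_singleton]
    constructor
    · intro hp; exact Or.inl ⟨h, hp⟩
    · rintro (⟨-, hp⟩ | ⟨σ, k, hσ, -, -⟩)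
      · exact hp
      · rw [h] at hσ; simp at hσ
  · simp only [Finset.mem_image, bdry, Finset.mem_filter, Finset.mem_product, Finset.mem_univ,
      and_true, h, false_and, false_or]
    constructor
    · rintro ⟨⟨σ, k⟩, ⟨h1, h2⟩, rfl⟩; exact ⟨σ, k, h1, h2, rfl⟩
    · rintro ⟨σ, k, h1, h2, rfl⟩; exact ⟨(σ, k), ⟨h1, h2⟩, rfl⟩

lemma card_stem {f : Fin m → Finset (List (Fin m))} (hm : 1 ≤ m) {i : Fin m}
    (hf : IsTree m (f i)) : (stem f i).card = (m - 1) * (f i).card + 1 := by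
  rw [stem]
  split_ifs with h
  · simp [h]
  · rw [Finset.card_image_of_injective _ (fun a b hab => ?_)]
    · have hne : [] ∈ f i := nil_mem_of_isTree hf (Finset.nonempty_of_ne_empty h)
      have hb := bdry_card_add hf hne
      have hc : 1 ≤ (f i).card := Finset.card_pos.mpr ⟨[], hne⟩
      have hmul : (m - 1) * (f i).card + (f i).card = m * (f i).card := by
        obtain ⟨m', rfl⟩ := Nat.exists_eq_add_of_le hm
        have h1 : 1 + m' - 1 = m' := by omega
        rw [h1]; ring
      omega
    · simp only [Prod.ext_iff, List.cons.injEq] at hab ⊢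
      exact ⟨hab.1.2, hab.2⟩

noncomputable def Mset (f : Fin m → Finset (List (Fin m))) (i : Fin m) :
    Finset ((List (Fin m) × Fin m) × List (Fin m)) :=
  (stem f i ×ˢ lowerF f i) ∪ (Dset m (f i)).image fun x => ((i :: x.1.1, x.1.2), i :: x.2)

lemma mem_Dset {T : Finset (List (Fin m))} {x : (List (Fin m) × Fin m) × List (Fin m)} :
    x ∈ Dset m T ↔ x.1.1 ∈ T ∧ x.2 ∈ T ∧ x.1.1 ++ [x.1.2] ∉ T ∧
      List.Lex (· < ·) x.2 (x.1.1 ++ [x.1.2]) ∧ ¬ x.2 <+: x.1.1 := by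
  simp only [Dset, Finset.mem_filter, Finset.mem_product, Finset.mem_univ, and_true]
  tauto

lemma card_Mset (f : Fin m → Finset (List (Fin m))) (i : Fin m) :
    (Mset f i).card = (stem f i).card * (lowerF f i).card + (Dset m (f i)).card := by
  rw [Mset, Finset.card_union_of_disjoint, Finset.card_product,
    Finset.card_image_of_injective]
  · rintro ⟨⟨σ, k⟩, τ⟩ ⟨⟨σ', k'⟩, τ'⟩ h
    simp only [Prod.ext_iff, List.cons.injEq] at h ⊢
    exact ⟨⟨h.1.1.2, h.1.2⟩, h.2.2⟩
  · simp only [Finset.disjoint_left, Finset.mem_product, Finset.mem_image]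
    rintro x ⟨-, hlow⟩ ⟨y, -, rfl⟩
    obtain ⟨j, hj, τ, -, h⟩ := mem_lowerF.mp hlow
    rw [List.cons_eq_cons] at h
    exact absurd (h.1 ▸ hj) (lt_irrefl i)

/-- index of a triple: head of `ω`, or `k` if `ω = []`. -/
def hd (x : (List (Fin m) × Fin m) × List (Fin m)) : Fin m := x.1.1.head?.getD x.1.2

lemma mem_Mset_of_mem_Dset_glue {f : Fin m → Finset (List (Fin m))}
    (hf : ∀ k, IsTree m (f k)) {x : (List (Fin m) × Fin m) × List (Fin m)}
    (hx : x ∈ Dset m (glue f)) : x ∈ Mset f (hd x) := by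
  obtain ⟨⟨ω, k⟩, ω'⟩ := x
  rw [mem_Dset] at hx
  obtain ⟨hω, hω', hbd, hlex, hpre⟩ := hx
  simp only at hω hω' hbd hlex hpre
  cases ω with
  | nil =>
    have hfk : f k = ∅ := by
      by_contra hne
      have h0 : [] ∈ f k := nil_mem_of_isTree (hf k) (Finset.nonempty_of_ne_empty hne)
      exact hbd (by simpa using cons_mem_glue.mpr h0)
    cases ω' with
    | nil => exact absurd List.nil_prefix hpre
    | cons j τ =>
      have hτ : τ ∈ f j := cons_mem_glue.mp hω'
      have hjk : j < k := by
        rcases lex_cons_cons_iff.mp (show List.Lex (· < ·) (j :: τ) (k :: []) from hlex) with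
          h | ⟨rfl, h⟩
        · exact h
        · exact absurd h (by intro hh; cases hh)
      refine Finset.mem_union_left _ (Finset.mem_product.mpr ⟨?_, ?_⟩)
      · exact mem_stem.mpr (Or.inl ⟨hfk, rfl⟩)
      · exact mem_lowerF.mpr ⟨j, hjk, τ, hτ, rfl⟩
  | cons i σ =>
    have hσ : σ ∈ f i := cons_mem_glue.mp hω
    have hbd' : σ ++ [k] ∉ f i := fun hc => hbd (by
      simpa [List.cons_append] using cons_mem_glue.mpr hc)
    cases ω' with
    | nil => exact absurd List.nil_prefix hpre
    | cons j τ =>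
      have hτ : τ ∈ f j := cons_mem_glue.mp hω'
      have hlex' : List.Lex (· < ·) (j :: τ) (i :: (σ ++ [k])) := by
        simpa [List.cons_append] using hlex
      rcases lex_cons_cons_iff.mp hlex' with hji | ⟨rfl, hlex''⟩
      · refine Finset.mem_union_left _ (Finset.mem_product.mpr ⟨?_, ?_⟩)
        · exact mem_stem.mpr (Or.inr ⟨σ, k, hσ, hbd', rfl⟩)
        · exact mem_lowerF.mpr ⟨j, hji, τ, hτ, rfl⟩
      · have hpre' : ¬ τ <+: σ := fun hc => hpre (List.cons_prefix_cons.mpr ⟨rfl, hc⟩)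
        refine Finset.mem_union_right _ (Finset.mem_image.mpr ⟨((σ, k), τ), ?_, rfl⟩)
        exact mem_Dset.mpr ⟨hσ, hτ, hbd', hlex'', hpre'⟩

lemma mem_Dset_glue_of_mem_Mset {f : Fin m → Finset (List (Fin m))}
    (hf : ∀ k, IsTree m (f k)) {i : Fin m} {x : (List (Fin m) × Fin m) × List (Fin m)}
    (hx : x ∈ Mset f i) : x ∈ Dset m (glue f) ∧ hd x = i := by
  obtain ⟨⟨ω, k⟩, ω'⟩ := x
  rw [Mset, Finset.mem_union] at hx
  rcases hx with hx | hx
  · rw [Finset.mem_product] at hx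
    obtain ⟨hstem, hlow⟩ := hx
    obtain ⟨j, hj, τ, hτ, hω'⟩ := mem_lowerF.mp hlow
    simp only at hω' hstem
    subst hω'
    rcases mem_stem.mp hstem with ⟨hempty, hp⟩ | ⟨σ, k', hσ, hbd, hp⟩
    · obtain ⟨rfl, hk⟩ : ω = [] ∧ k = i := by simpa [Prod.ext_iff] using hp
      subst hk
      refine ⟨mem_Dset.mpr ⟨?_, ?_, ?_, ?_, ?_⟩, rfl⟩
      · exact mem_glue.mpr (Or.inl rfl)
      · exact cons_mem_glue.mpr hτ
      · intro hc
        have h0 := cons_mem_glue.mp hc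
        simp [hempty] at h0
      · exact List.Lex.rel hj
      · intro hc
        simpa using List.prefix_nil.mp hc
    · obtain ⟨rfl, hk⟩ : ω = i :: σ ∧ k = k' := by simpa [Prod.ext_iff] using hp
      subst hk
      refine ⟨mem_Dset.mpr ⟨?_, ?_, ?_, ?_, ?_⟩, rfl⟩
      · exact cons_mem_glue.mpr hσ
      · exact cons_mem_glue.mpr hτ
      · exact fun hc => hbd (cons_mem_glue.mp hc)
      · exact List.Lex.rel hj
      · intro hc
        obtain ⟨h1, -⟩ := List.cons_prefix_cons.mp hc
        exact absurd (h1 ▸ hj) (lt_irrefl _)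
  · obtain ⟨⟨⟨σ, k''⟩, τ⟩, hy, heq⟩ := Finset.mem_image.mp hx
    obtain ⟨hσ, hτ, hbd, hlex, hpre⟩ := mem_Dset.mp hy
    simp only at hσ hτ hbd hlex hpre
    obtain ⟨⟨rfl, hk⟩, rfl⟩ : (ω = i :: σ ∧ k = k'') ∧ ω' = i :: τ := by
      simpa [Prod.ext_iff] using heq.symm
    subst hk
    refine ⟨mem_Dset.mpr ⟨?_, ?_, ?_, ?_, ?_⟩, rfl⟩
    · exact cons_mem_glue.mpr hσ
    · exact cons_mem_glue.mpr hτ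
    · exact fun hc => hbd (cons_mem_glue.mp hc)
    · exact List.Lex.cons hlex
    · exact fun hc => hpre (List.cons_prefix_cons.mp hc).2

lemma card_Dset_glue {f : Fin m → Finset (List (Fin m))} (hf : ∀ k, IsTree m (f k)) :
    (Dset m (glue f)).card = ∑ i, (Mset f i).card := by
  rw [← Finset.card_sigma Finset.univ (Mset f)]
  refine Finset.card_nbij' (fun x => ⟨hd x, x⟩) (fun y => y.2) ?_ ?_ ?_ ?_
  · intro x hx
    rw [Finset.mem_coe, Finset.mem_sigma]
    exact ⟨Finset.mem_univ _, mem_Mset_of_mem_Dset_glue hf hx⟩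
  · rintro ⟨i, x⟩ hy
    rw [Finset.mem_coe, Finset.mem_sigma] at hy
    exact (mem_Dset_glue_of_mem_Mset hf hy.2).1
  · intro x hx; rfl
  · rintro ⟨i, x⟩ hy
    rw [Finset.mem_coe, Finset.mem_sigma] at hy
    have := (mem_Dset_glue_of_mem_Mset hf hy.2).2
    simp [this]

lemma card_filter_lt (j : Fin m) :
    (Finset.univ.filter fun i : Fin m => j < i).card = m - 1 - (j : ℕ) := by
  have h : (Finset.univ.filter fun i : Fin m => j < i).card
      = (Finset.Ico ((j : ℕ) + 1) m).card := by
    refine Finset.card_bij (fun i _ => (i : ℕ)) ?_ ?_ ?_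
    · intro i hi
      simp only [Finset.mem_filter, Finset.mem_univ, true_and, Fin.lt_def] at hi
      exact Finset.mem_Ico.mpr ⟨hi, i.isLt⟩
    · intro a _ b _ h
      exact Fin.val_injective h
    · intro n hn
      rw [Finset.mem_Ico] at hn
      refine ⟨⟨n, hn.2⟩, ?_, rfl⟩
      simp only [Finset.mem_filter, Finset.mem_univ, true_and, Fin.lt_def]
      exact hn.1
  rw [h, Nat.card_Ico]
  omega

lemma sum_lower_count (g : Fin m → ℤ) :
    ∑ i : Fin m, ∑ j ∈ Finset.univ.filter (· < i), g j
      = ((m : ℤ) - 1) * ∑ j : Fin m, g j - ∑ j : Fin m, (j : ℤ) * g j := by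
  calc ∑ i : Fin m, ∑ j ∈ Finset.univ.filter (· < i), g j
      = ∑ i : Fin m, ∑ j : Fin m, if j < i then g j else 0 := by
        refine Finset.sum_congr rfl fun i _ => ?_
        rw [Finset.sum_filter]
    _ = ∑ j : Fin m, ∑ i : Fin m, if j < i then g j else 0 := Finset.sum_comm
    _ = ∑ j : Fin m, ((m : ℤ) - 1 - (j : ℤ)) * g j := by
        refine Finset.sum_congr rfl fun j _ => ?_
        rw [← Finset.sum_filter, Finset.sum_const, nsmul_eq_mul, card_filter_lt]
        have hj := j.isLt
        congr 1
        omega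
    _ = ((m : ℤ) - 1) * ∑ j : Fin m, g j - ∑ j : Fin m, (j : ℤ) * g j := by
        rw [Finset.mul_sum, ← Finset.sum_sub_distrib]
        exact Finset.sum_congr rfl fun j _ => by ring

lemma sq_sum_split (g : Fin m → ℤ) :
    (∑ i : Fin m, g i) ^ 2 = ∑ i : Fin m, (g i) ^ 2
      + 2 * ∑ i : Fin m, g i * ∑ j ∈ Finset.univ.filter (· < i), g j := by
  have key : ∀ i j : Fin m, g i * g j = (if j < i then g i * g j else 0)
      + (if i < j then g i * g j else 0) + (if i = j then g i * g j else 0) := by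
    intro i j
    rcases lt_trichotomy i j with h | h | h
    · rw [if_neg (asymm h), if_pos h, if_neg h.ne]; ring
    · subst h; rw [if_neg (lt_irrefl _), if_pos rfl]; ring
    · rw [if_pos h, if_neg (asymm h), if_neg h.ne']; ring
  have expand : (∑ i : Fin m, g i) ^ 2 = ∑ i : Fin m, ∑ j : Fin m, g i * g j := by
    rw [sq, Finset.sum_mul_sum]
  have S2eq : ∑ i : Fin m, ∑ j : Fin m, (if i < j then g i * g j else 0)
      = ∑ i : Fin m, ∑ j : Fin m, (if j < i then g i * g j else 0) := by
    rw [Finset.sum_comm]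
    refine Finset.sum_congr rfl fun i _ => Finset.sum_congr rfl fun j _ => ?_
    by_cases h : j < i
    · simp only [if_pos h]
      ring
    · simp only [if_neg h]
  have S1eq : ∑ i : Fin m, ∑ j : Fin m, (if j < i then g i * g j else 0)
      = ∑ i : Fin m, g i * ∑ j ∈ Finset.univ.filter (· < i), g j := by
    refine Finset.sum_congr rfl fun i _ => ?_
    rw [Finset.mul_sum, Finset.sum_filter]
  have S3eq : ∑ i : Fin m, ∑ j : Fin m, (if i = j then g i * g j else 0)
      = ∑ i : Fin m, (g i) ^ 2 := by
    refine Finset.sum_congr rfl fun i _ => ?_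
    rw [Finset.sum_ite_eq]
    simp [sq]
  calc (∑ i : Fin m, g i) ^ 2 = ∑ i : Fin m, ∑ j : Fin m, g i * g j := expand
    _ = ∑ i : Fin m, ∑ j : Fin m, ((if j < i then g i * g j else 0)
        + (if i < j then g i * g j else 0) + (if i = j then g i * g j else 0)) := by
        exact Finset.sum_congr rfl fun i _ => Finset.sum_congr rfl fun j _ => key i j
    _ = ∑ i : Fin m, ∑ j : Fin m, (if j < i then g i * g j else 0)
        + ∑ i : Fin m, ∑ j : Fin m, (if i < j then g i * g j else 0)
        + ∑ i : Fin m, ∑ j : Fin m, (if i = j then g i * g j else 0) := by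
        simp_rw [Finset.sum_add_distrib]
    _ = ∑ i : Fin m, (g i) ^ 2
        + 2 * ∑ i : Fin m, g i * ∑ j ∈ Finset.univ.filter (· < i), g j := by
        rw [S2eq, S1eq, S3eq]; ring

lemma arith_core (d E c : Fin m → ℤ) (C : ℤ)
    (hC : 2 * C = ((∑ k, d k) + 1) * (∑ k, d k))
    (hc : ∀ k, 2 * c k = d k * (d k - 1)) :
    -(((m : ℤ) - 1) * C)
        + ∑ i : Fin m, ((((m : ℤ) - 1) * d i + 1) * (∑ j ∈ Finset.univ.filter (· < i), d j) + E i)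
      = ∑ k : Fin m, (-((k : ℤ) * d k) + (-(((m : ℤ) - 1) * c k) + E k)) := by
  have hCs : 2 * ∑ k, c k = (∑ k, d k ^ 2) - ∑ k, d k := by
    rw [Finset.mul_sum]
    rw [show ∑ i : Fin m, 2 * c i = ∑ i : Fin m, (d i * (d i - 1)) from
      Finset.sum_congr rfl fun k _ => hc k]
    rw [← Finset.sum_sub_distrib]
    exact Finset.sum_congr rfl fun k _ => by ring
  have hB := sum_lower_count d
  have hA := sq_sum_split d
  have hL : ∑ i : Fin m, ((((m : ℤ) - 1) * d i + 1)
        * (∑ j ∈ Finset.univ.filter (· < i), d j) + E i)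
      = ((m : ℤ) - 1) * (∑ i : Fin m, d i * ∑ j ∈ Finset.univ.filter (· < i), d j)
        + ((∑ i : Fin m, ∑ j ∈ Finset.univ.filter (· < i), d j) + ∑ i, E i) := by
    rw [Finset.mul_sum, ← Finset.sum_add_distrib, ← Finset.sum_add_distrib]
    exact Finset.sum_congr rfl fun i _ => by ring
  have hR : ∑ k : Fin m, (-((k : ℤ) * d k) + (-(((m : ℤ) - 1) * c k) + E k))
      = -(∑ k : Fin m, (k : ℤ) * d k) + (-(((m : ℤ) - 1) * ∑ k, c k) + ∑ k, E k) := by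
    rw [Finset.sum_add_distrib, Finset.sum_add_distrib, Finset.sum_neg_distrib,
      Finset.sum_neg_distrib, Finset.mul_sum]
  rw [hL, hR]
  apply mul_left_cancel₀ (two_ne_zero (α := ℤ))
  linear_combination (-(((m : ℤ) - 1))) * hC + (-((m : ℤ) - 1)) * hA + 2 * hB
    + (((m : ℤ) - 1)) * hCs

lemma half_dvd (d : ℕ) : (2 : ℤ) ∣ (d : ℤ) * ((d : ℤ) - 1) := by
  have h := Int.even_mul_succ_self ((d : ℤ) - 1)
  rw [sub_add_cancel] at h
  rw [mul_comm]
  exact h.two_dvd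

lemma half_mul (d : ℕ) : ((m : ℤ) - 1) * (d : ℤ) * ((d : ℤ) - 1) / 2
    = ((m : ℤ) - 1) * ((d : ℤ) * ((d : ℤ) - 1) / 2) := by
  rw [mul_assoc, Int.mul_ediv_assoc _ (half_dvd d)]

lemma two_half (d : ℕ) : 2 * ((d : ℤ) * ((d : ℤ) - 1) / 2) = (d : ℤ) * ((d : ℤ) - 1) :=
  Int.mul_ediv_cancel' (half_dvd d)

lemma exponent_identity (hm : 1 ≤ m) (f : Fin m → Finset (List (Fin m)))
    (hf : ∀ k, IsTree m (f k)) :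
    -(((m : ℤ) - 1) * ((glue f).card : ℤ) * (((glue f).card : ℤ) - 1) / 2)
        + ((Dset m (glue f)).card : ℤ)
      = ∑ k : Fin m, (-((k : ℤ) * ((f k).card : ℤ))
          + (-(((m : ℤ) - 1) * ((f k).card : ℤ) * (((f k).card : ℤ) - 1) / 2)
            + ((Dset m (f k)).card : ℤ))) := by
  have hE : (Dset m (glue f)).card = ∑ i : Fin m,
      (((m - 1) * (f i).card + 1) * (∑ j ∈ Finset.univ.filter (· < i), (f j).card)
        + (Dset m (f i)).card) := by
    rw [card_Dset_glue hf]
    refine Finset.sum_congr rfl fun i _ => ?_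
    rw [card_Mset, card_stem hm (hf i), card_lowerF]
  have hcard : ((glue f).card : ℤ) = 1 + ∑ k : Fin m, ((f k).card : ℤ) := by
    rw [card_glue]
    push_cast
    ring
  have hC : 2 * (((glue f).card : ℤ) * (((glue f).card : ℤ) - 1) / 2)
      = ((∑ k : Fin m, ((f k).card : ℤ)) + 1) * (∑ k : Fin m, ((f k).card : ℤ)) := by
    rw [two_half, hcard]
    ring
  have key := arith_core (m := m) (fun k => ((f k).card : ℤ))
    (fun k => ((Dset m (f k)).card : ℤ))
    (fun k => ((f k).card : ℤ) * (((f k).card : ℤ) - 1) / 2)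
    (((glue f).card : ℤ) * (((glue f).card : ℤ) - 1) / 2)
    hC (fun k => two_half _)
  have hE' : ((Dset m (glue f)).card : ℤ) = ∑ i : Fin m,
      ((((m : ℤ) - 1) * ((f i).card : ℤ) + 1)
          * (∑ j ∈ Finset.univ.filter (· < i), ((f j).card : ℤ))
        + ((Dset m (f i)).card : ℤ)) := by
    rw [hE]
    push_cast [Nat.cast_sub hm]
    exact Finset.sum_congr rfl fun i _ => by ring
  rw [half_mul, hE']
  rw [key]
  refine Finset.sum_congr rfl fun k _ => ?_
  rw [half_mul]

lemma T_prod_sum {ι : Type} (s : Finset ι) (g : ι → ℤ) :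
    (∏ i ∈ s, (T (g i) : LaurentPolynomial ℤ)) = T (∑ i ∈ s, g i) := by
  induction s using Finset.cons_induction with
  | empty => simp
  | cons a s ha ih => rw [Finset.prod_cons, Finset.sum_cons, ih, ← T_add]

noncomputable def lOf (S : Finset (List (Fin m))) : ℕ →₀ ℕ :=
  Finsupp.onFinset (Finset.range m)
    (fun k => if h : k < m then (subt (⟨k, h⟩ : Fin m) S).card else 0)
    (fun k hk => by
      rw [Finset.mem_range]
      by_contra h
      exact hk (dif_neg h))

lemma lOf_apply {S : Finset (List (Fin m))} (k : Fin m) : lOf S (k : ℕ) = (subt k S).card := by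
  rw [lOf, Finsupp.onFinset_apply, dif_pos k.isLt]

lemma lOf_apply_of_ge {S : Finset (List (Fin m))} {k : ℕ} (h : ¬ k < m) : lOf S k = 0 := by
  rw [lOf, Finsupp.onFinset_apply, dif_neg h]

lemma coeff_Fpaving (d : ℕ) : (PowerSeries.coeff d) (Fpaving m)
    = ∑ S ∈ treesOfSize m d,
      (T (-(((m : ℤ) - 1) * d * ((d : ℤ) - 1) / 2) + (Dset m S).card) :
        LaurentPolynomial ℤ) := by
  rw [Fpaving, coeff_mk]

lemma treesOfSize_zero : treesOfSize m 0 = {∅} := by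
  ext S
  rw [mem_treesOfSize, Finset.mem_singleton]
  constructor
  · rintro ⟨-, h⟩
    exact Finset.card_eq_zero.mp h
  · rintro rfl
    exact ⟨fun ω hω => by simp at hω, rfl⟩

lemma Dset_empty : Dset m (∅ : Finset (List (Fin m))) = ∅ := by
  simp [Dset]

end Aux

theorem Fpaving_functional_equation (m : ℕ) (hm : 1 ≤ m) :
    Fpaving m = 1 + X * ∏ k ∈ Finset.range m,
      rescale ((T (-(k : ℤ))) : LaurentPolynomial ℤ) (Fpaving m) := by
  refine PowerSeries.ext fun d => ?_
  rw [map_add]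
  cases d with
  | zero =>
    rw [PowerSeries.coeff_one, if_pos rfl, coeff_Fpaving, treesOfSize_zero,
      Finset.sum_singleton, Dset_empty]
    norm_num
  | succ n =>
    rw [PowerSeries.coeff_one, if_neg (Nat.succ_ne_zero n), PowerSeries.coeff_succ_X_mul,
      zero_add, PowerSeries.coeff_prod, coeff_Fpaving]
    have hstep : ∀ l ∈ Finset.finsuppAntidiag (Finset.range m) n,
        (∏ k ∈ Finset.range m, (PowerSeries.coeff (l k))
            ((rescale ((T (-(k : ℤ))) : LaurentPolynomial ℤ)) (Fpaving m)))
          = ∑ p ∈ Fintype.piFinset (fun k : Fin m => treesOfSize m (l (k : ℕ))),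
              (T (∑ k : Fin m, (-((k : ℤ) * ((l (k : ℕ) : ℕ) : ℤ))
                + (-(((m : ℤ) - 1) * ((l (k : ℕ) : ℕ) : ℤ) * (((l (k : ℕ) : ℕ) : ℤ) - 1) / 2)
                  + ((Dset m (p k)).card : ℤ)))) : LaurentPolynomial ℤ) := by
      intro l _
      rw [← Fin.prod_univ_eq_prod_range]
      have h1 : ∀ k : Fin m, (PowerSeries.coeff (l (k : ℕ)))
            ((rescale ((T (-((k : ℕ) : ℤ))) : LaurentPolynomial ℤ)) (Fpaving m))
          = ∑ S ∈ treesOfSize m (l (k : ℕ)),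
              (T (-((k : ℤ) * ((l (k : ℕ) : ℕ) : ℤ))
                + (-(((m : ℤ) - 1) * ((l (k : ℕ) : ℕ) : ℤ) * (((l (k : ℕ) : ℕ) : ℤ) - 1) / 2)
                  + ((Dset m S).card : ℤ))) : LaurentPolynomial ℤ) := by
        intro k
        rw [coeff_rescale, coeff_Fpaving, Finset.mul_sum]
        refine Finset.sum_congr rfl fun S _ => ?_
        rw [T_pow, ← T_add]
        congr 1
        ring
      rw [Finset.prod_congr rfl fun k _ => h1 k, Finset.prod_univ_sum]
      exact Finset.sum_congr rfl fun p _ => T_prod_sum _ _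
    rw [Finset.sum_congr rfl hstep, Finset.sum_sigma']
    refine Finset.sum_nbij' (fun S => ⟨lOf S, fun k => subt k S⟩) (fun x => glue x.2)
      ?_ ?_ ?_ ?_ ?_
    · intro S hS
      obtain ⟨hT, hcard⟩ := mem_treesOfSize.mp hS
      have hne : S.Nonempty := Finset.card_pos.mp (hcard ▸ n.succ_pos)
      rw [Finset.mem_sigma]
      dsimp only
      constructor
      · rw [Finset.mem_finsuppAntidiag]
        constructor
        · have hsum : ∑ k ∈ Finset.range m, lOf S k = ∑ k : Fin m, (subt k S).card := by
            rw [← Fin.sum_univ_eq_sum_range]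
            exact Finset.sum_congr rfl fun k _ => lOf_apply k
          have hc : S.card = 1 + ∑ k : Fin m, (subt k S).card := by
            conv_lhs => rw [← glue_subt hT hne]
            rw [card_glue]
          have hsum' : (Finset.range m).sum ⇑(lOf S) = ∑ k : Fin m, (subt k S).card := hsum
          omega
        · intro k hk
          rw [Finset.mem_range]
          by_contra h
          exact (Finsupp.mem_support_iff.mp hk) (lOf_apply_of_ge h)
      · rw [Fintype.mem_piFinset]
        intro k
        rw [mem_treesOfSize]
        exact ⟨isTree_subt hT k, (lOf_apply k).symm⟩
    · intro x hx
      rw [Finset.mem_sigma] at hx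
      obtain ⟨hl, hp⟩ := hx
      rw [Finset.mem_finsuppAntidiag] at hl
      rw [Fintype.mem_piFinset] at hp
      rw [mem_treesOfSize]
      refine ⟨isTree_glue (fun k => (mem_treesOfSize.mp (hp k)).1), ?_⟩
      rw [card_glue]
      rw [Finset.sum_congr rfl fun k (_ : k ∈ Finset.univ) =>
        (mem_treesOfSize.mp (hp k)).2]
      rw [Fin.sum_univ_eq_sum_range]
      have h' : ∑ i ∈ Finset.range m, x.1 i = n := hl.1
      omega
    · intro S hS
      obtain ⟨hT, hcard⟩ := mem_treesOfSize.mp hS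
      exact glue_subt hT (Finset.card_pos.mp (hcard ▸ n.succ_pos))
    · rintro ⟨l, p⟩ hx
      rw [Finset.mem_sigma] at hx
      obtain ⟨hl, hp⟩ := hx
      rw [Finset.mem_finsuppAntidiag] at hl
      rw [Fintype.mem_piFinset] at hp
      have h2 : (fun k => subt k (glue p)) = p := funext fun k => subt_glue k
      have h1 : lOf (glue p) = l := by
        ext k
        by_cases h : k < m
        · have hk : lOf (glue p) k = (subt (⟨k, h⟩ : Fin m) (glue p)).card := by
            rw [lOf, Finsupp.onFinset_apply, dif_pos h]
          rw [hk, subt_glue]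
          exact (mem_treesOfSize.mp (hp ⟨k, h⟩)).2
        · rw [lOf_apply_of_ge h]
          symm
          by_contra hne
          exact h (Finset.mem_range.mp (hl.2 (Finsupp.mem_support_iff.mpr hne)))
      exact Sigma.ext h1 (heq_of_eq h2)
    · intro S hS
      obtain ⟨hT, hcard⟩ := mem_treesOfSize.mp hS
      have hne : S.Nonempty := Finset.card_pos.mp (hcard ▸ n.succ_pos)
      have hid := exponent_identity hm (fun k => subt k S) (fun k => isTree_subt hT k)
      rw [glue_subt hT hne, hcard] at hid
      show (T (-(((m : ℤ) - 1) * ((n + 1 : ℕ) : ℤ) * (((n + 1 : ℕ) : ℤ) - 1) / 2)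
          + ((Dset m S).card : ℤ)) : LaurentPolynomial ℤ) = _
      simp only [lOf_apply]
      rw [hid]
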